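/- arXiv:1405.7867 — 3 statements merged into one kernel-verified Lean document; each statement's English description precedes it below -/
import Mathlib

section
/- Second moment formula for the lazy importance sampling weight with state-dependent continuation: E[W_lazy²] = ∫ (ξ(φ)/α(φ)) dG(φ), where ξ(φ) = E[L̂²·(π(θ)/g(θ))² | φ], provided α(φ) > 0 G-a.s. on {ξ(φ) > 0}. -/
open MeasureTheory ProbabilityTheory
open scoped ENNReal

/-- Core tower-type lemma at the level of Lebesgue integrals: for an `m`-measurable
nonnegative `ℝ≥0∞`-valued `g` and an integrable nonnegative `f` with conditional
expectation (a.e.) `η`, we have `∫⁻ g·f = ∫⁻ g·η`. -/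
private lemma lintegral_mul_condexp_aux {Ω : Type*} {m m0 : MeasurableSpace Ω}
    (hm : m ≤ m0) (μ : @Measure Ω m0) [IsFiniteMeasure μ]
    {g : Ω → ℝ≥0∞} (hg : Measurable[m] g)
    {f : Ω → ℝ} (hf : Integrable f μ) (hfnn : 0 ≤ᵐ[μ] f)
    {η : Ω → ℝ} (hη : μ[f|m] =ᵐ[μ] η) :
    ∫⁻ ω, g ω * ENNReal.ofReal (f ω) ∂μ = ∫⁻ ω, g ω * ENNReal.ofReal (η ω) ∂μ := by
  have hgm0 : Measurable[m0] g := hg.mono hm le_rfl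
  have hηnn : 0 ≤ᵐ[μ] η := by
    filter_upwards [condExp_nonneg hfnn, hη] with ω h1 h2
    rw [← h2]; exact h1
  have hηint : Integrable η μ := integrable_condExp.congr hη
  set F := fun ω => ENNReal.ofReal (f ω) with hF
  set H := fun ω => ENNReal.ofReal (η ω) with hH
  have hFm : AEMeasurable F μ :=
    ENNReal.measurable_ofReal.comp_aemeasurable hf.aestronglyMeasurable.aemeasurable
  have hHm : AEMeasurable H μ :=
    ENNReal.measurable_ofReal.comp_aemeasurable hηint.aestronglyMeasurable.aemeasurable
  have hset : ∀ s, MeasurableSet[m] s → ∫⁻ ω in s, F ω ∂μ = ∫⁻ ω in s, H ω ∂μ := by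
    intro s hs
    have h1 : ∫⁻ ω in s, F ω ∂μ = ENNReal.ofReal (∫ ω in s, f ω ∂μ) :=
      (ofReal_integral_eq_lintegral_ofReal hf.restrict (ae_restrict_of_ae hfnn)).symm
    have h2 : ∫⁻ ω in s, H ω ∂μ = ENNReal.ofReal (∫ ω in s, η ω ∂μ) :=
      (ofReal_integral_eq_lintegral_ofReal hηint.restrict (ae_restrict_of_ae hηnn)).symm
    rw [h1, h2]
    congr 1
    calc ∫ ω in s, f ω ∂μ = ∫ ω in s, (μ[f|m]) ω ∂μ := (setIntegral_condExp hm hf hs).symm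
      _ = ∫ ω in s, η ω ∂μ := integral_congr_ae (ae_restrict_of_ae hη)
  have key : (μ.withDensity F).trim hm = (μ.withDensity H).trim hm := by
    refine @Measure.ext Ω m _ _ (fun s hs => ?_)
    rw [trim_measurableSet_eq hm hs, trim_measurableSet_eq hm hs,
      withDensity_apply _ (hm _ hs), withDensity_apply _ (hm _ hs)]
    exact hset s hs
  calc ∫⁻ ω, g ω * F ω ∂μ = ∫⁻ ω, (F * g) ω ∂μ :=
        lintegral_congr fun ω => mul_comm _ _
    _ = ∫⁻ ω, g ω ∂(μ.withDensity F) :=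
        (lintegral_withDensity_eq_lintegral_mul₀ hFm hgm0.aemeasurable).symm
    _ = ∫⁻ ω, g ω ∂((μ.withDensity F).trim hm) := (lintegral_trim hm hg).symm
    _ = ∫⁻ ω, g ω ∂((μ.withDensity H).trim hm) := by rw [key]
    _ = ∫⁻ ω, g ω ∂(μ.withDensity H) := lintegral_trim hm hg
    _ = ∫⁻ ω, (H * g) ω ∂μ := lintegral_withDensity_eq_lintegral_mul₀ hHm hgm0.aemeasurable
    _ = ∫⁻ ω, g ω * H ω ∂μ := lintegral_congr fun ω => mul_comm _ _

/-- Second moment formula for the lazy importance sampling weight with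
state-dependent continuation probability:
`E[W_lazy²] = ∫ ξ(φ)/α(φ) dG(φ)` where `ξ(φ) = E[V² | φ]`,
`V = L̂π(θ)/g(θ)`, `G` is the law of `φ`, and terms with `α(φ) = 0`
are interpreted as `0`. -/
theorem lazy_weight_second_moment
    {Ω Φ : Type*} [MeasurableSpace Ω] [MeasurableSpace Φ]
    (μ : Measure Ω) [IsProbabilityMeasure μ]
    (φ : Ω → Φ) (hφ : Measurable φ)
    (V : Ω → ℝ) (hVnn : ∀ ω, 0 ≤ V ω) (hV2 : MemLp V 2 μ)
    (α : Φ → ℝ) (hα_meas : Measurable α) (hα01 : ∀ x, α x ∈ Set.Icc (0 : ℝ) 1)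
    (ξ : Φ → ℝ) (hξ_meas : Measurable ξ)
    (hξ : μ[fun ω => (V ω) ^ 2 | MeasurableSpace.comap φ inferInstance]
      =ᵐ[μ] fun ω => ξ (φ ω))
    (B : Set Ω) (hB : MeasurableSet B)
    (hcond : μ[B.indicator (fun _ => (1 : ℝ)) |
        MeasurableSpace.comap (fun ω => (φ ω, V ω)) inferInstance]
      =ᵐ[μ] fun ω => α (φ ω))
    (hguard : ∀ᵐ x ∂(Measure.map φ μ), α x = 0 → ξ x = 0) :
    ∫ ω, (if α (φ ω) = 0 then 0
        else B.indicator (fun _ => (1 : ℝ)) ω * V ω / α (φ ω)) ^ 2 ∂μ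
      = ∫ x, (if α x = 0 then 0 else ξ x / α x) ∂(Measure.map φ μ) := by
  classical
  set k₂ : Φ → ℝ := fun x => if α x = 0 then 0 else ξ x / α x with hk₂def
  have hk₂meas : Measurable k₂ := by
    apply Measurable.ite (hα_meas (measurableSet_singleton 0))
      measurable_const (hξ_meas.div hα_meas)
  have hm₂ : MeasurableSpace.comap φ inferInstance ≤ (inferInstance : MeasurableSpace Ω) :=
    hφ.comap_le
  have hφm₂ : Measurable[MeasurableSpace.comap φ inferInstance] φ :=
    Measurable.of_comap_le le_rfl
  by_cases hm₁ : MeasurableSpace.comap (fun ω => (φ ω, V ω)) inferInstance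
      ≤ (inferInstance : MeasurableSpace Ω)
  · -- main case
    have hpair : Measurable[MeasurableSpace.comap (fun ω => (φ ω, V ω)) inferInstance]
        (fun ω => (φ ω, V ω)) := Measurable.of_comap_le le_rfl
    have hVm : Measurable[MeasurableSpace.comap (fun ω => (φ ω, V ω)) inferInstance] V :=
      measurable_snd.comp hpair
    have hφm₁ : Measurable[MeasurableSpace.comap (fun ω => (φ ω, V ω)) inferInstance] φ :=
      measurable_fst.comp hpair
    have hVm0 : Measurable V := hVm.mono hm₁ le_rfl
    set f₁ : Ω → ℝ := B.indicator (fun _ => (1 : ℝ)) with hf₁def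
    have hf₁meas : Measurable f₁ := measurable_const.indicator hB
    have hf₁int : Integrable f₁ μ := (integrable_const (1 : ℝ)).indicator hB
    have hf₁nn : 0 ≤ᵐ[μ] f₁ :=
      Filter.Eventually.of_forall fun ω => Set.indicator_nonneg (fun _ _ => zero_le_one) ω
    set h : Ω → ℝ := fun ω => (if α (φ ω) = 0 then 0 else f₁ ω * V ω / α (φ ω)) ^ 2 with hhdef
    have hhmeas : Measurable h := by
      apply Measurable.pow_const
      exact Measurable.ite ((hα_meas.comp hφ) (measurableSet_singleton 0)) measurable_const
        ((hf₁meas.mul hVm0).div (hα_meas.comp hφ))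
    set g₁ : Ω → ℝ≥0∞ := fun ω =>
      if α (φ ω) = 0 then 0 else ENNReal.ofReal ((V ω) ^ 2 / (α (φ ω)) ^ 2) with hg₁def
    have hg₁meas : Measurable[MeasurableSpace.comap (fun ω => (φ ω, V ω)) inferInstance] g₁ := by
      apply Measurable.ite (((hα_meas.comp hφm₁)) (measurableSet_singleton 0)) measurable_const
      exact ENNReal.measurable_ofReal.comp
        (((hVm.pow_const 2).div ((hα_meas.comp hφm₁).pow_const 2)))
    set g₂ : Ω → ℝ≥0∞ := fun ω =>
      if α (φ ω) = 0 then 0 else ENNReal.ofReal (1 / α (φ ω)) with hg₂def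
    have hg₂meas : Measurable[MeasurableSpace.comap φ inferInstance] g₂ := by
      apply Measurable.ite (((hα_meas.comp hφm₂)) (measurableSet_singleton 0)) measurable_const
      exact ENNReal.measurable_ofReal.comp (measurable_const.div (hα_meas.comp hφm₂))
    -- Step A : pointwise identity ofReal (h ω) = g₁ ω * ofReal (f₁ ω)
    have stepA : ∀ ω, ENNReal.ofReal (h ω) = g₁ ω * ENNReal.ofReal (f₁ ω) := by
      intro ω
      by_cases hα0 : α (φ ω) = 0
      · simp [hhdef, hg₁def, hα0]
      · have hVsq : 0 ≤ (V ω) ^ 2 / (α (φ ω)) ^ 2 :=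
          div_nonneg (sq_nonneg _) (sq_nonneg _)
        have hrw : h ω = (V ω) ^ 2 / (α (φ ω)) ^ 2 * f₁ ω := by
          simp only [hhdef, hf₁def, if_neg hα0]
          by_cases hω : ω ∈ B
          · simp only [Set.indicator_of_mem hω]
            field_simp
          · simp [Set.indicator_of_notMem hω]
        rw [hrw, hg₁def]
        simp only [if_neg hα0]
        exact ENNReal.ofReal_mul hVsq
    -- Step B : pointwise identity g₁ ω * ofReal (α (φ ω)) = g₂ ω * ofReal ((V ω)^2)
    have stepB : ∀ ω, g₁ ω * ENNReal.ofReal (α (φ ω)) = g₂ ω * ENNReal.ofReal ((V ω) ^ 2) := by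
      intro ω
      by_cases hα0 : α (φ ω) = 0
      · simp [hg₁def, hg₂def, hα0]
      · simp only [hg₁def, hg₂def, if_neg hα0]
        rw [← ENNReal.ofReal_mul (div_nonneg (sq_nonneg _) (sq_nonneg _)),
          ← ENNReal.ofReal_mul (one_div_nonneg.mpr (hα01 (φ ω)).1)]
        congr 1
        field_simp
    -- Step C : pointwise identity g₂ ω * ofReal (ξ (φ ω)) = ofReal (k₂ (φ ω))
    have stepC : ∀ ω, g₂ ω * ENNReal.ofReal (ξ (φ ω)) = ENNReal.ofReal (k₂ (φ ω)) := by
      intro ω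
      by_cases hα0 : α (φ ω) = 0
      · simp [hg₂def, hk₂def, hα0]
      · simp only [hg₂def, hk₂def, if_neg hα0]
        rw [← ENNReal.ofReal_mul (one_div_nonneg.mpr (hα01 (φ ω)).1)]
        congr 1
        rw [one_div, inv_mul_eq_div]
    -- conditional expectation steps
    have hA : ∫⁻ ω, g₁ ω * ENNReal.ofReal (f₁ ω) ∂μ
        = ∫⁻ ω, g₁ ω * ENNReal.ofReal (α (φ ω)) ∂μ :=
      lintegral_mul_condexp_aux hm₁ μ hg₁meas hf₁int hf₁nn hcond
    have hBstep : ∫⁻ ω, g₂ ω * ENNReal.ofReal ((V ω) ^ 2) ∂μ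
        = ∫⁻ ω, g₂ ω * ENNReal.ofReal (ξ (φ ω)) ∂μ :=
      lintegral_mul_condexp_aux hm₂ μ hg₂meas hV2.integrable_sq
        (Filter.Eventually.of_forall fun ω => sq_nonneg _) hξ
    -- assemble the chain of lintegral equalities
    have hchain : ∫⁻ ω, ENNReal.ofReal (h ω) ∂μ
        = ∫⁻ x, ENNReal.ofReal (k₂ x) ∂(Measure.map φ μ) := by
      calc ∫⁻ ω, ENNReal.ofReal (h ω) ∂μ
          = ∫⁻ ω, g₁ ω * ENNReal.ofReal (f₁ ω) ∂μ := lintegral_congr stepA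
        _ = ∫⁻ ω, g₁ ω * ENNReal.ofReal (α (φ ω)) ∂μ := hA
        _ = ∫⁻ ω, g₂ ω * ENNReal.ofReal ((V ω) ^ 2) ∂μ := lintegral_congr stepB
        _ = ∫⁻ ω, g₂ ω * ENNReal.ofReal (ξ (φ ω)) ∂μ := hBstep
        _ = ∫⁻ ω, ENNReal.ofReal (k₂ (φ ω)) ∂μ := lintegral_congr stepC
        _ = ∫⁻ x, ENNReal.ofReal (k₂ x) ∂(Measure.map φ μ) :=
            (lintegral_map (ENNReal.measurable_ofReal.comp hk₂meas) hφ).symm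
    -- nonnegativity of k₂ a.e. w.r.t. the pushforward
    have hξnn : ∀ᵐ ω ∂μ, 0 ≤ ξ (φ ω) := by
      filter_upwards [condExp_nonneg (μ := μ) (m := MeasurableSpace.comap φ inferInstance)
        (Filter.Eventually.of_forall fun ω => sq_nonneg (V ω)), hξ] with ω h1 h2
      rw [← h2]; exact h1
    have hξnn' : ∀ᵐ x ∂(Measure.map φ μ), 0 ≤ ξ x :=
      (ae_map_iff hφ.aemeasurable (measurableSet_le measurable_const hξ_meas)).mpr hξnn
    have hk₂nn : 0 ≤ᵐ[Measure.map φ μ] k₂ := by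
      filter_upwards [hξnn'] with x hx
      by_cases hα0 : α x = 0
      · simp [hk₂def, hα0]
      · simp only [hk₂def, if_neg hα0]
        exact div_nonneg hx (hα01 x).1
    -- rewrite both Bochner integrals via lintegrals
    rw [integral_eq_lintegral_of_nonneg_ae
        (Filter.Eventually.of_forall fun ω => sq_nonneg _)
        hhmeas.aestronglyMeasurable,
      integral_eq_lintegral_of_nonneg_ae hk₂nn hk₂meas.aestronglyMeasurable]
    rw [hchain]
  · -- degenerate case : the comap σ-algebra is not a sub-σ-algebra, so condexp = 0
    have hzero : (fun ω => α (φ ω)) =ᵐ[μ] 0 := by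
      have h0 := condExp_of_not_le
        (f := B.indicator (fun _ => (1 : ℝ))) (μ := μ) hm₁
      exact hcond.symm.trans (h0 ▸ Filter.EventuallyEq.rfl)
    have hL : ∫ ω, (if α (φ ω) = 0 then 0
        else B.indicator (fun _ => (1 : ℝ)) ω * V ω / α (φ ω)) ^ 2 ∂μ = 0 := by
      rw [integral_congr_ae (g := fun _ => (0:ℝ)) ?_, integral_zero]
      filter_upwards [hzero] with ω hω
      simp only [Pi.zero_apply] at hω
      simp [hω]
    have hR : ∫ x, (if α x = 0 then 0 else ξ x / α x) ∂(Measure.map φ μ) = 0 := by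
      rw [integral_map hφ.aemeasurable hk₂meas.aestronglyMeasurable]
      rw [integral_congr_ae (g := fun _ => (0:ℝ)) ?_, integral_zero]
      filter_upwards [hzero] with ω hω
      simp only [Pi.zero_apply] at hω
      simp [hk₂def, hω]
    rw [hL, hR]
end

section
/- Optimal importance density for random-weight importance sampling: among probability densities g with g > 0 on {π·γ > 0}, the product E_g[W²]·E_g[T] with W = L̂π(θ)/g(θ), γ(θ) = E[L̂²|θ], and E_g[T] = ∫ T̄(θ)g(θ)dθ, i.e. the product (∫ π(θ)²γ(θ)/g(θ) dθ)(∫ T̄(θ)g(θ) dθ), is minimized by g(θ) ∝ π(θ)√(γ(θ)/T̄(θ)), with minimum value (∫ π(θ)√(γ(θ)T̄(θ)) dθ)². -/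
open MeasureTheory


lemma cs_aux {d : ℕ} (F G : (Fin d → ℝ) → ℝ)
    (hF_meas : AEStronglyMeasurable F (volume : Measure (Fin d → ℝ)))
    (hG_meas : AEStronglyMeasurable G (volume : Measure (Fin d → ℝ)))
    (hF_nn : ∀ θ, 0 ≤ F θ) (hG_nn : ∀ θ, 0 ≤ G θ)
    (hF : Integrable F) (hG : Integrable G) :
    (∫ θ, Real.sqrt (F θ) * Real.sqrt (G θ)) ^ 2 ≤ (∫ θ, F θ) * (∫ θ, G θ) := by
  have hpq : Real.HolderConjugate 2 2 := Real.HolderConjugate.two_two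
  have hu_meas : AEStronglyMeasurable (fun θ => Real.sqrt (F θ)) volume :=
    (Real.continuous_sqrt.comp_aestronglyMeasurable hF_meas)
  have hv_meas : AEStronglyMeasurable (fun θ => Real.sqrt (G θ)) volume :=
    (Real.continuous_sqrt.comp_aestronglyMeasurable hG_meas)
  have hu2 : (fun θ => Real.sqrt (F θ) ^ 2) = F := by
    funext θ; exact Real.sq_sqrt (hF_nn θ)
  have hv2 : (fun θ => Real.sqrt (G θ) ^ 2) = G := by
    funext θ; exact Real.sq_sqrt (hG_nn θ)
  have hu : MemLp (fun θ => Real.sqrt (F θ)) (ENNReal.ofReal 2) volume := by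
    rw [show ENNReal.ofReal 2 = 2 by norm_num]
    exact (memLp_two_iff_integrable_sq hu_meas).2 (by rw [hu2]; exact hF)
  have hv : MemLp (fun θ => Real.sqrt (G θ)) (ENNReal.ofReal 2) volume := by
    rw [show ENNReal.ofReal 2 = 2 by norm_num]
    exact (memLp_two_iff_integrable_sq hv_meas).2 (by rw [hv2]; exact hG)
  have key := integral_mul_le_Lp_mul_Lq_of_nonneg hpq
    (Filter.Eventually.of_forall fun θ => Real.sqrt_nonneg (F θ))
    (Filter.Eventually.of_forall fun θ => Real.sqrt_nonneg (G θ)) hu hv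
  have hFr : (fun (θ : Fin d → ℝ) => Real.sqrt (F θ) ^ (2:ℝ)) = F := by
    funext θ; rw [show ((2:ℝ) = ((2:ℕ):ℝ)) by norm_num, Real.rpow_natCast]
    exact Real.sq_sqrt (hF_nn θ)
  have hGr : (fun (θ : Fin d → ℝ) => Real.sqrt (G θ) ^ (2:ℝ)) = G := by
    funext θ; rw [show ((2:ℝ) = ((2:ℕ):ℝ)) by norm_num, Real.rpow_natCast]
    exact Real.sq_sqrt (hG_nn θ)
  rw [show (fun a => Real.sqrt (F a) ^ (2:ℝ)) = F from hFr] at key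
  rw [show (fun a => Real.sqrt (G a) ^ (2:ℝ)) = G from hGr] at key
  have hFnn : 0 ≤ ∫ θ, F θ := integral_nonneg hF_nn
  have hGnn : 0 ≤ ∫ θ, G θ := integral_nonneg hG_nn
  have hlhs_nn : 0 ≤ ∫ θ, Real.sqrt (F θ) * Real.sqrt (G θ) :=
    integral_nonneg fun θ => mul_nonneg (Real.sqrt_nonneg _) (Real.sqrt_nonneg _)
  calc (∫ θ, Real.sqrt (F θ) * Real.sqrt (G θ)) ^ 2
      ≤ ((∫ θ, F θ) ^ (1/2:ℝ) * (∫ θ, G θ) ^ (1/2:ℝ)) ^ 2 := by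
        apply pow_le_pow_left₀ hlhs_nn key
    _ = (∫ θ, F θ) * (∫ θ, G θ) := by
        rw [mul_pow, ← Real.rpow_natCast ((∫ θ, F θ) ^ (1/2:ℝ)) 2,
          ← Real.rpow_natCast ((∫ θ, G θ) ^ (1/2:ℝ)) 2,
          ← Real.rpow_mul hFnn, ← Real.rpow_mul hGnn]
        norm_num

/-- Optimal importance density for random-weight importance sampling
(Corollary 1 of the paper): the product
`J(g) = (∫ π²γ/g)(∫ T̄g)` over probability densities `g` (positive where
`π²γ > 0`) is minimized by `g ∝ π√(γ/T̄)`, with minimum value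
`(∫ π√(γT̄))²`. -/
theorem optimal_importance_density
    {d : ℕ} (pi γ Tbar : (Fin d → ℝ) → ℝ)
    (hpi_meas : Measurable pi) (hγ_meas : Measurable γ) (hT_meas : Measurable Tbar)
    (hpi_nn : ∀ θ, 0 ≤ pi θ) (hγ_pos : ∀ θ, 0 < γ θ) (hT_pos : ∀ θ, 0 < Tbar θ)
    (hpi_dens : ∫ θ, pi θ = 1)
    (hint1 : Integrable (fun θ => pi θ * Real.sqrt (γ θ * Tbar θ)))
    (hint2 : Integrable (fun θ => pi θ * Real.sqrt (γ θ / Tbar θ)))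
    (hc_pos : 0 < ∫ θ, pi θ * Real.sqrt (γ θ / Tbar θ)) :
    ((∫ θ, (if (pi θ * Real.sqrt (γ θ / Tbar θ)
              / ∫ θ', pi θ' * Real.sqrt (γ θ' / Tbar θ')) = 0 then 0
            else pi θ ^ 2 * γ θ
              / (pi θ * Real.sqrt (γ θ / Tbar θ)
                  / ∫ θ', pi θ' * Real.sqrt (γ θ' / Tbar θ'))))
          * (∫ θ, Tbar θ * (pi θ * Real.sqrt (γ θ / Tbar θ)
              / ∫ θ', pi θ' * Real.sqrt (γ θ' / Tbar θ')))
        = (∫ θ, pi θ * Real.sqrt (γ θ * Tbar θ)) ^ 2)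
      ∧ ∀ g : (Fin d → ℝ) → ℝ, Measurable g → (∀ θ, 0 ≤ g θ) →
          (∫ θ, g θ = 1) → (∀ θ, 0 < pi θ ^ 2 * γ θ → 0 < g θ) →
          Integrable (fun θ => if g θ = 0 then 0 else pi θ ^ 2 * γ θ / g θ) →
          Integrable (fun θ => Tbar θ * g θ) →
          (∫ θ, pi θ * Real.sqrt (γ θ * Tbar θ)) ^ 2
            ≤ (∫ θ, (if g θ = 0 then 0 else pi θ ^ 2 * γ θ / g θ))
                * (∫ θ, Tbar θ * g θ) := by
  set c : ℝ := ∫ θ', pi θ' * Real.sqrt (γ θ' / Tbar θ') with hc_def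
  have hc_ne : c ≠ 0 := ne_of_gt hc_pos
  have hs_pos : ∀ θ, 0 < Real.sqrt (γ θ / Tbar θ) := fun θ =>
    Real.sqrt_pos.2 (div_pos (hγ_pos θ) (hT_pos θ))
  have hsγ : ∀ θ, Real.sqrt (γ θ / Tbar θ) * Real.sqrt (γ θ * Tbar θ) = γ θ := by
    intro θ
    rw [← Real.sqrt_mul (div_pos (hγ_pos θ) (hT_pos θ)).le]
    rw [show γ θ / Tbar θ * (γ θ * Tbar θ) = γ θ ^ 2 by
      field_simp [(hT_pos θ).ne']]
    exact Real.sqrt_sq (hγ_pos θ).le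
  constructor
  · -- part 1
    have heq1 : (fun θ => (if (pi θ * Real.sqrt (γ θ / Tbar θ) / c) = 0 then 0
            else pi θ ^ 2 * γ θ / (pi θ * Real.sqrt (γ θ / Tbar θ) / c)))
        = fun θ => c * (pi θ * Real.sqrt (γ θ * Tbar θ)) := by
      funext θ
      rcases eq_or_lt_of_le (hpi_nn θ) with hp0 | hp
      · simp [← hp0]
      · have hsq := hsγ θ
        set s := Real.sqrt (γ θ / Tbar θ) with hs_def
        set q := Real.sqrt (γ θ * Tbar θ) with hq_def
        have hs : 0 < s := hs_pos θ
        rw [if_neg (ne_of_gt (div_pos (mul_pos hp hs) hc_pos))]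
        field_simp
        linear_combination -1 * hsq
    have heq2 : (fun θ => Tbar θ * (pi θ * Real.sqrt (γ θ / Tbar θ) / c))
        = fun θ => pi θ * Real.sqrt (γ θ * Tbar θ) / c := by
      funext θ
      have hTs : Tbar θ * Real.sqrt (γ θ / Tbar θ) = Real.sqrt (γ θ * Tbar θ) := by
        rw [show γ θ * Tbar θ = Tbar θ ^ 2 * (γ θ / Tbar θ) by field_simp [(hT_pos θ).ne'],
          Real.sqrt_mul (sq_nonneg _), Real.sqrt_sq (hT_pos θ).le]
      linear_combination (pi θ / c) * hTs
    rw [heq1, heq2, MeasureTheory.integral_const_mul, integral_div]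
    field_simp
  · -- part 2
    intro g hg_meas hg_nn hg_dens hg_pos hF_int hG_int
    set F : (Fin d → ℝ) → ℝ := fun θ => if g θ = 0 then 0 else pi θ ^ 2 * γ θ / g θ with hF_def
    set G : (Fin d → ℝ) → ℝ := fun θ => Tbar θ * g θ with hG_def
    have hF_nn : ∀ θ, 0 ≤ F θ := by
      intro θ; simp only [hF_def]
      split
      · exact le_rfl
      · exact div_nonneg (mul_nonneg (sq_nonneg _) (hγ_pos θ).le) (hg_nn θ)
    have hG_nn : ∀ θ, 0 ≤ G θ := fun θ => mul_nonneg (hT_pos θ).le (hg_nn θ)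
    have hpoint : ∀ θ, pi θ * Real.sqrt (γ θ * Tbar θ)
        = Real.sqrt (F θ) * Real.sqrt (G θ) := by
      intro θ
      by_cases h0 : g θ = 0
      · have hπ0 : pi θ = 0 := by
          by_contra hne
          have hp : 0 < pi θ := lt_of_le_of_ne (hpi_nn θ) (Ne.symm hne)
          have := hg_pos θ (mul_pos (pow_pos hp 2) (hγ_pos θ))
          exact absurd h0 (ne_of_gt this)
        simp [hF_def, h0, hπ0]
      · have hgp : 0 < g θ := lt_of_le_of_ne (hg_nn θ) (Ne.symm h0)
        simp only [hF_def, hG_def, if_neg h0]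
        rw [← Real.sqrt_mul (div_nonneg (mul_nonneg (sq_nonneg _) (hγ_pos θ).le) hgp.le)]
        rw [show pi θ ^ 2 * γ θ / g θ * (Tbar θ * g θ) = pi θ ^ 2 * (γ θ * Tbar θ) by
          field_simp]
        rw [Real.sqrt_mul (sq_nonneg _), Real.sqrt_sq (hpi_nn θ)]
    have hF_meas : AEStronglyMeasurable F volume := by
      apply Measurable.aestronglyMeasurable
      exact Measurable.ite (hg_meas (measurableSet_singleton 0)) measurable_const
        (((hpi_meas.pow_const 2).mul hγ_meas).div hg_meas)
    have hG_meas : AEStronglyMeasurable G volume :=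
      (hT_meas.mul hg_meas).aestronglyMeasurable
    have key := cs_aux F G hF_meas hG_meas hF_nn hG_nn hF_int hG_int
    calc (∫ θ, pi θ * Real.sqrt (γ θ * Tbar θ)) ^ 2
        = (∫ θ, Real.sqrt (F θ) * Real.sqrt (G θ)) ^ 2 := by
          congr 1; exact integral_congr_ae (Filter.Eventually.of_forall hpoint)
      _ ≤ (∫ θ, F θ) * (∫ θ, G θ) := key
end

section
/- Unbiasedness of multi-stage lazy estimator: under the multi-stage setup with P(Bᵢ | θ, X, B₁,…,B_{i−1}) = α⁽ⁱ⁾(φᵢ) > 0 and L̂ ≥ 0 integrable satisfying E[L̂ | θ] = L(θ), the estimator L̂_lazy = L̂·1_{∩Bᵢ}/∏ᵢα⁽ⁱ⁾(φᵢ) satisfies E[L̂_lazy | θ] = L(θ). -/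
open MeasureTheory ProbabilityTheory
open scoped ENNReal

lemma lazy_aux {Ω : Type*} {m : MeasurableSpace Ω} [m0 : MeasurableSpace Ω] (hm : m ≤ m0)
    (μ : Measure Ω) [IsProbabilityMeasure μ] {Bs : Set Ω} (hBs : MeasurableSet Bs)
    {aB : Ω → ℝ} (haB : Measurable aB) (haB01 : ∀ ω, aB ω ∈ Set.Ioc (0 : ℝ) 1)
    (hcond : μ[Bs.indicator (fun _ => (1 : ℝ)) | m] =ᵐ[μ] aB)
    {g : Ω → ℝ≥0∞} (hg : Measurable[m] g) :
    ∫⁻ ω, g ω * Bs.indicator 1 ω ∂μ = ∫⁻ ω, g ω * ENNReal.ofReal (aB ω) ∂μ := by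
  have hind_int : Integrable (Bs.indicator fun _ => (1 : ℝ)) μ :=
    (integrable_const 1).indicator hBs
  have key : ∀ s, MeasurableSet[m] s →
      μ (s ∩ Bs) = ∫⁻ ω in s, ENNReal.ofReal (aB ω) ∂μ := by
    intro s hs
    have h1 : ∫ x in s, Bs.indicator (fun _ => (1 : ℝ)) x ∂μ = ∫ x in s, aB x ∂μ := by
      rw [← setIntegral_condExp hm hind_int hs]
      exact setIntegral_congr_ae (hm s hs) (hcond.mono fun ω h _ => h)
    have h2 : ∫ x in s, Bs.indicator (fun _ => (1 : ℝ)) x ∂μ = (μ (s ∩ Bs)).toReal := by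
      rw [setIntegral_indicator hBs, setIntegral_const, smul_eq_mul, mul_one]
      rfl
    have h3 : ∫ x in s, aB x ∂μ = (∫⁻ ω in s, ENNReal.ofReal (aB ω) ∂μ).toReal := by
      rw [integral_eq_lintegral_of_nonneg_ae
        (Filter.Eventually.of_forall fun ω => (haB01 ω).1.le)
        haB.aestronglyMeasurable.restrict]
    have hfin : ∫⁻ ω in s, ENNReal.ofReal (aB ω) ∂μ ≠ ∞ := by
      refine ne_of_lt (lt_of_le_of_lt (le_trans (lintegral_mono fun ω => ?_)
        (le_of_eq (lintegral_one))) ?_)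
      · exact ENNReal.ofReal_le_one.mpr (haB01 ω).2
      · simp [lt_top_iff_ne_top]
    exact (ENNReal.toReal_eq_toReal_iff' (measure_ne_top μ _) hfin).mp (by rw [← h2, h1, h3])
  have htrim : (μ.restrict Bs).trim hm
      = ((μ.withDensity fun ω => ENNReal.ofReal (aB ω)).trim hm) := by
    refine @Measure.ext Ω m _ _ fun s hs => ?_
    rw [trim_measurableSet_eq hm hs, trim_measurableSet_eq hm hs,
      Measure.restrict_apply (hm s hs), withDensity_apply _ (hm s hs)]
    exact key s hs
  calc ∫⁻ ω, g ω * Bs.indicator 1 ω ∂μ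
      = ∫⁻ ω, Bs.indicator g ω ∂μ := by
        refine lintegral_congr fun ω => ?_
        by_cases h : ω ∈ Bs <;> simp [h]
    _ = ∫⁻ ω, g ω ∂(μ.restrict Bs) := lintegral_indicator hBs g
    _ = ∫⁻ ω, g ω ∂((μ.restrict Bs).trim hm) := (lintegral_trim hm hg).symm
    _ = ∫⁻ ω, g ω ∂((μ.withDensity fun ω => ENNReal.ofReal (aB ω)).trim hm) := by rw [htrim]
    _ = ∫⁻ ω, g ω ∂(μ.withDensity fun ω => ENNReal.ofReal (aB ω)) := lintegral_trim hm hg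
    _ = ∫⁻ ω, ((fun ω => ENNReal.ofReal (aB ω)) * g) ω ∂μ :=
        lintegral_withDensity_eq_lintegral_mul μ (ENNReal.measurable_ofReal.comp haB)
          (hg.mono hm le_rfl)
    _ = ∫⁻ ω, g ω * ENNReal.ofReal (aB ω) ∂μ := lintegral_congr fun ω => mul_comm _ _

/-- Unbiasedness of the multi-stage lazy estimator: with conditionally
independent continuation decisions `Bᵢ` of strictly positive probabilities
`a i (θ, X)`, and `L̂ ≥ 0` an integrable function of `(θ, X)`, the estimator
`L̂·1_{⋂Bᵢ}/∏ a i (θ, X)` has the same conditional expectation given `θ`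
as `L̂`, i.e. `E[L̂_lazy | θ] = L(θ)`. -/
theorem multistage_lazy_unbiased
    {Ω Θ E : Type*} [MeasurableSpace Ω] [MeasurableSpace Θ] [MeasurableSpace E]
    (μ : Measure Ω) [IsProbabilityMeasure μ]
    (θf : Ω → Θ) (hθ : Measurable θf) (Xf : Ω → E) (hX : Measurable Xf)
    (n : ℕ) (a : Fin n → Θ × E → ℝ) (ha_meas : ∀ i, Measurable (a i))
    (ha01 : ∀ i z, a i z ∈ Set.Ioc (0 : ℝ) 1)
    (B : Fin n → Set Ω) (hB : ∀ i, MeasurableSet (B i))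
    (hcond : ∀ i : Fin n,
      μ[(B i).indicator (fun _ => (1 : ℝ)) |
          MeasurableSpace.comap (fun ω => (θf ω, Xf ω)) inferInstance
            ⊔ MeasurableSpace.generateFrom {t | ∃ j : Fin n, j < i ∧ t = B j}]
        =ᵐ[μ] fun ω => a i (θf ω, Xf ω))
    (Lhat : Θ × E → ℝ) (hL_meas : Measurable Lhat) (hLnn : ∀ z, 0 ≤ Lhat z)
    (hLint : Integrable (fun ω => Lhat (θf ω, Xf ω)) μ) :
    μ[fun ω => (⋂ i, B i).indicator
          (fun ω' => Lhat (θf ω', Xf ω') / ∏ i, a i (θf ω', Xf ω')) ω |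
        MeasurableSpace.comap θf inferInstance]
      =ᵐ[μ] μ[fun ω => Lhat (θf ω, Xf ω) |
        MeasurableSpace.comap θf inferInstance] := by
  classical
  have hπ : Measurable (fun ω => (θf ω, Xf ω)) := hθ.prodMk hX
  have hπcm : Measurable[MeasurableSpace.comap (fun ω => (θf ω, Xf ω)) inferInstance]
      (fun ω => (θf ω, Xf ω)) := fun s hs => ⟨s, hs, rfl⟩
  have hθπ : MeasurableSpace.comap θf inferInstance ≤
      MeasurableSpace.comap (fun ω => (θf ω, Xf ω)) inferInstance := by
    rintro s ⟨t, ht, rfl⟩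
    exact ⟨t ×ˢ Set.univ, ht.prod MeasurableSet.univ, by ext ω; simp⟩
  set mτ : Fin n → MeasurableSpace Ω := fun i =>
    MeasurableSpace.comap (fun ω => (θf ω, Xf ω)) inferInstance
      ⊔ MeasurableSpace.generateFrom {t | ∃ j : Fin n, j < i ∧ t = B j} with hmτdef
  have hmτ : ∀ i, mτ i ≤ ‹MeasurableSpace Ω› := fun i =>
    sup_le hπ.comap_le (MeasurableSpace.generateFrom_le (by rintro t ⟨j, -, rfl⟩; exact hB j))
  set ea : Fin n → Ω → ℝ≥0∞ := fun j ω => ENNReal.ofReal (a j (θf ω, Xf ω)) with headef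
  set ind : Fin n → Ω → ℝ≥0∞ := fun j ω => (B j).indicator 1 ω with hinddef
  set eL : Ω → ℝ≥0∞ := fun ω => ENNReal.ofReal (Lhat (θf ω, Xf ω)) with heLdef
  have hea0 : ∀ j ω, ea j ω ≠ 0 := fun j ω =>
    (ENNReal.ofReal_pos.mpr (ha01 j _).1).ne'
  have heatop : ∀ j ω, ea j ω ≠ ∞ := fun j ω => ENNReal.ofReal_ne_top
  have hea_cm : ∀ j, Measurable[MeasurableSpace.comap (fun ω => (θf ω, Xf ω)) inferInstance]
      (ea j) := fun j => (ENNReal.measurable_ofReal.comp (ha_meas j)).comp hπcm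
  have heL_cm : Measurable[MeasurableSpace.comap (fun ω => (θf ω, Xf ω)) inferInstance] eL :=
    (ENNReal.measurable_ofReal.comp hL_meas).comp hπcm
  -- main downward integration
  have main : ∀ (s : Set Ω), MeasurableSet[MeasurableSpace.comap θf inferInstance] s →
      ∀ k : ℕ, k ≤ n →
      ∫⁻ ω, s.indicator 1 ω *
          ((∏ j ∈ Finset.univ.filter (fun j : Fin n => (j : ℕ) < k), ind j ω) * eL ω *
            (∏ j ∈ Finset.univ.filter (fun j : Fin n => (j : ℕ) < k), ea j ω)⁻¹) ∂μ
        = ∫⁻ ω, s.indicator 1 ω * eL ω ∂μ := by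
    intro s hs k
    induction k with
    | zero => intro _; simp
    | succ k ih =>
      intro hk
      have hk' : k < n := hk
      set K : Fin n := ⟨k, hk'⟩ with hKdef
      have hfilter : (Finset.univ.filter fun j : Fin n => (j : ℕ) < k + 1)
          = insert K (Finset.univ.filter fun j : Fin n => (j : ℕ) < k) := by
        ext j
        simp only [Finset.mem_filter, Finset.mem_insert, Finset.mem_univ, true_and, hKdef,
          Fin.ext_iff]
        omega
      have hKnot : K ∉ Finset.univ.filter (fun j : Fin n => (j : ℕ) < k) := by
        simp [hKdef]
      set P : Ω → ℝ≥0∞ := fun ω => ∏ j ∈ Finset.univ.filter (fun j : Fin n => (j : ℕ) < k), ind j ω with hPdef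
      set Q : Ω → ℝ≥0∞ := fun ω => ∏ j ∈ Finset.univ.filter (fun j : Fin n => (j : ℕ) < k), ea j ω with hQdef
      set g : Ω → ℝ≥0∞ := fun ω => s.indicator 1 ω * (P ω * eL ω * (ea K ω * Q ω)⁻¹) with hgdef
      have hle1 : MeasurableSpace.comap (fun ω => (θf ω, Xf ω)) inferInstance ≤ mτ K :=
        le_sup_left
      have hle2 : MeasurableSpace.generateFrom {t | ∃ j : Fin n, j < K ∧ t = B j} ≤ mτ K :=
        le_sup_right
      have hs' : MeasurableSet[mτ K] s := hle1 s (hθπ s hs)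
      have hg : Measurable[mτ K] g := by
        refine Measurable.mul (measurable_const.indicator hs') ?_
        refine Measurable.mul (Measurable.mul ?_ (heL_cm.mono hle1 le_rfl)) ?_
        · refine Finset.measurable_prod _ fun j hj => ?_
          have hjK : j < K := by
            rw [Fin.lt_def]
            exact (Finset.mem_filter.mp hj).2
          have hBj : MeasurableSet[mτ K] (B j) :=
            hle2 _ (MeasurableSpace.measurableSet_generateFrom ⟨j, hjK, rfl⟩)
          exact measurable_const.indicator hBj
        · exact Measurable.inv (Measurable.mul ((hea_cm K).mono hle1 le_rfl)
            (Finset.measurable_prod _ fun j _ => (hea_cm j).mono hle1 le_rfl))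
      have step := lazy_aux (hmτ K) μ (hB K) ((ha_meas K).comp hπ)
        (fun ω => ha01 K (θf ω, Xf ω)) (hcond K) hg
      calc ∫⁻ ω, s.indicator 1 ω *
              ((∏ j ∈ Finset.univ.filter (fun j : Fin n => (j : ℕ) < k + 1), ind j ω) * eL ω *
                (∏ j ∈ Finset.univ.filter (fun j : Fin n => (j : ℕ) < k + 1), ea j ω)⁻¹) ∂μ
          = ∫⁻ ω, g ω * (B K).indicator 1 ω ∂μ := by
            refine lintegral_congr fun ω => ?_
            rw [hfilter, Finset.prod_insert hKnot, Finset.prod_insert hKnot]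
            show s.indicator 1 ω * (ind K ω * P ω * eL ω * (ea K ω * Q ω)⁻¹)
              = g ω * ind K ω
            first
            | (rw [hgdef]; ring)
            | rw [hgdef]
        _ = ∫⁻ ω, g ω * ENNReal.ofReal (a K (θf ω, Xf ω)) ∂μ := step
        _ = ∫⁻ ω, s.indicator 1 ω * (P ω * eL ω * (Q ω)⁻¹) ∂μ := by
            refine lintegral_congr fun ω => ?_
            rw [hgdef]
            show s.indicator 1 ω * (P ω * eL ω * (ea K ω * Q ω)⁻¹) * ea K ω
              = s.indicator 1 ω * (P ω * eL ω * (Q ω)⁻¹)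
            rw [ENNReal.mul_inv (Or.inl (hea0 K ω)) (Or.inl (heatop K ω))]
            calc s.indicator 1 ω * (P ω * eL ω * ((ea K ω)⁻¹ * (Q ω)⁻¹)) * ea K ω
                = s.indicator 1 ω * (P ω * eL ω * (Q ω)⁻¹) * ((ea K ω)⁻¹ * ea K ω) := by ring
              _ = s.indicator 1 ω * (P ω * eL ω * (Q ω)⁻¹) := by
                  rw [ENNReal.inv_mul_cancel (hea0 K ω) (heatop K ω), mul_one]
        _ = ∫⁻ ω, s.indicator 1 ω * eL ω ∂μ := ih (Nat.le_of_succ_le hk)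
  have hfiltn : (Finset.univ.filter fun j : Fin n => (j : ℕ) < n) = Finset.univ := by
    ext j; simp [j.isLt]
  set f : Ω → ℝ := fun ω => (⋂ i, B i).indicator
      (fun ω' => Lhat (θf ω', Xf ω') / ∏ i, a i (θf ω', Xf ω')) ω with hfdef
  have hf_nonneg : ∀ ω, 0 ≤ f ω := fun ω =>
    Set.indicator_nonneg (fun ω' _ => div_nonneg (hLnn _)
      (Finset.prod_nonneg fun i _ => (ha01 i _).1.le)) ω
  have hofReal : ∀ ω, ENNReal.ofReal (f ω)
      = (∏ j, ind j ω) * eL ω * (∏ j, ea j ω)⁻¹ := by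
    intro ω
    by_cases h : ω ∈ ⋂ i, B i
    · have h1 : ∀ j, ind j ω = 1 := fun j => by
        simp [hinddef, Set.indicator_of_mem (Set.mem_iInter.mp h j)]
      have hprodpos : 0 < ∏ i, a i (θf ω, Xf ω) :=
        Finset.prod_pos fun i _ => (ha01 i _).1
      rw [hfdef]
      simp only [Set.indicator_of_mem h]
      rw [ENNReal.ofReal_div_of_pos hprodpos,
        ENNReal.ofReal_prod_of_nonneg (fun i _ => (ha01 i _).1.le), div_eq_mul_inv]
      rw [Finset.prod_eq_one fun j _ => h1 j, one_mul]
    · obtain ⟨i, hi⟩ : ∃ i, ω ∉ B i := by simpa [Set.mem_iInter] using h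
      rw [hfdef]
      simp only [Set.indicator_of_notMem h, ENNReal.ofReal_zero]
      rw [Finset.prod_eq_zero (Finset.mem_univ i)
        (by simp [hinddef, Set.indicator_of_notMem hi]), zero_mul, zero_mul]
  have hm' : MeasurableSpace.comap θf inferInstance ≤ ‹MeasurableSpace Ω› := hθ.comap_le
  have key : ∀ s, MeasurableSet[MeasurableSpace.comap θf inferInstance] s →
      ∫⁻ ω in s, ENNReal.ofReal (f ω) ∂μ = ∫⁻ ω in s, eL ω ∂μ := by
    intro s hs
    have hs0 : MeasurableSet s := hm' s hs
    rw [← lintegral_indicator hs0, ← lintegral_indicator hs0]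
    have h1 : ∀ (F : Ω → ℝ≥0∞) ω, s.indicator F ω = s.indicator 1 ω * F ω := by
      intro F ω; by_cases h : ω ∈ s <;> simp [h]
    calc ∫⁻ ω, s.indicator (fun ω => ENNReal.ofReal (f ω)) ω ∂μ
        = ∫⁻ ω, s.indicator 1 ω *
            ((∏ j ∈ Finset.univ.filter (fun j : Fin n => (j : ℕ) < n), ind j ω) * eL ω *
              (∏ j ∈ Finset.univ.filter (fun j : Fin n => (j : ℕ) < n), ea j ω)⁻¹) ∂μ := by
          refine lintegral_congr fun ω => ?_
          rw [h1, hofReal ω, hfiltn]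
      _ = ∫⁻ ω, s.indicator 1 ω * eL ω ∂μ := main s hs n le_rfl
      _ = ∫⁻ ω, s.indicator eL ω ∂μ := lintegral_congr fun ω => (h1 eL ω).symm
  have hf_meas : Measurable f := by
    refine Measurable.indicator ?_ (MeasurableSet.iInter hB)
    exact (hL_meas.comp hπ).div (Finset.measurable_prod _ fun i _ => (ha_meas i).comp hπ)
  have heL_lt : ∫⁻ ω, eL ω ∂μ < ∞ := by
    have := hLint.2
    rwa [hasFiniteIntegral_iff_ofReal (Filter.Eventually.of_forall fun ω => hLnn _)] at this
  have hf_int : Integrable f μ := by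
    refine ⟨hf_meas.aestronglyMeasurable, ?_⟩
    rw [hasFiniteIntegral_iff_ofReal (Filter.Eventually.of_forall hf_nonneg)]
    have huniv := key Set.univ MeasurableSet.univ
    rw [Measure.restrict_univ] at huniv
    rw [huniv]
    exact heL_lt
  have seteq : ∀ s, MeasurableSet[MeasurableSpace.comap θf inferInstance] s →
      ∫ x in s, Lhat (θf x, Xf x) ∂μ = ∫ x in s, f x ∂μ := by
    intro s hs
    rw [integral_eq_lintegral_of_nonneg_ae (Filter.Eventually.of_forall fun ω => hLnn _)
      (hLint.1.restrict), integral_eq_lintegral_of_nonneg_ae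
      (Filter.Eventually.of_forall fun ω => hf_nonneg ω)
      (hf_meas.aestronglyMeasurable.restrict)]
    congr 1
    rw [key s hs]
  refine (ae_eq_condExp_of_forall_setIntegral_eq hm' hf_int
    (fun s _ _ => integrable_condExp.integrableOn)
    (fun s hs _ => ?_)
    (StronglyMeasurable.aestronglyMeasurable stronglyMeasurable_condExp)).symm
  rw [setIntegral_condExp hm' hLint hs]
  exact seteq s hs
end
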